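/- Bounded affine permutation from a matrix: let A be a full-rank M×n complex matrix with columns A_1,…,A_n extended periodically by A_{i+n} = A_i. Define f_A(i) := min{j ≥ i : A_i ∈ Span(A_{i+1},…,A_j)}. Then f_A is well-defined and satisfies: f_A is a bijection Z → Z, f_A(i+n) = f_A(i) + n, and i ≤ f_A(i) ≤ i + n for all i ∈ Z. -/

import Mathlib

/-- Bounded affine permutation from a (periodically extended) full-rank family of columns:
there is a function `f : ℤ → ℤ` with `f(i)` the minimum of
`{j ≥ i : v_i ∈ Span(v_{i+1},…,v_j)}` (so `f` is well defined), and `f` is a bijection of `ℤ`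
satisfying `f(i+n) = f(i) + n` and `i ≤ f(i) ≤ i + n` for all `i ∈ ℤ`. -/
theorem stmt15 (M n : ℕ) (hM : 1 ≤ M) (hn : 1 ≤ n) (hMn : M ≤ n)
    (v : ℤ → (Fin M → ℂ))
    (hper : ∀ i : ℤ, v (i + n) = v i)
    (hspan : Submodule.span ℂ (Set.range v) = ⊤) :
    ∃ f : ℤ → ℤ,
      (∀ i : ℤ,
        IsLeast {j : ℤ | i ≤ j ∧ v i ∈ Submodule.span ℂ (v '' Set.Ioc i j)} (f i)) ∧
      Function.Bijective f ∧
      (∀ i : ℤ, f (i + n) = f i + n) ∧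
      (∀ i : ℤ, i ≤ f i ∧ f i ≤ i + n) := by
  have hn' : (1 : ℤ) ≤ (n : ℤ) := by exact_mod_cast hn
  set S : ℤ → Set ℤ :=
    fun i => {j : ℤ | i ≤ j ∧ v i ∈ Submodule.span ℂ (v '' Set.Ioc i j)} with hS
  have htop : ∀ i : ℤ, i + n ∈ S i := by
    intro i
    refine ⟨by omega, Submodule.subset_span ⟨i + n, ?_, hper i⟩⟩
    simp only [Set.mem_Ioc]
    omega
  have hleast : ∀ i : ℤ, ∃ m, IsLeast (S i) m := by
    intro i
    obtain ⟨lb, hlb, hmin⟩ := Int.exists_least_of_bdd (P := fun j => j ∈ S i)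
      ⟨i, fun z hz => hz.1⟩ ⟨i + n, htop i⟩
    exact ⟨lb, hlb, hmin⟩
  choose f hf using hleast
  have himg : ∀ a b : ℤ, v '' Set.Ioc (a + n) (b + n) = v '' Set.Ioc a b := by
    intro a b
    ext y
    simp only [Set.mem_image, Set.mem_Ioc]
    constructor
    · rintro ⟨x, hx, rfl⟩
      refine ⟨x - n, by omega, ?_⟩
      have := hper (x - n)
      rw [show x - n + n = x by ring] at this
      exact this.symm
    · rintro ⟨x, hx, rfl⟩
      exact ⟨x + n, by omega, hper x⟩
  have hfper : ∀ i : ℤ, f (i + n) = f i + n := by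
    intro i
    have h1 : IsLeast (S (i + n)) (f i + n) := by
      constructor
      · refine ⟨by have := (hf i).1.1; omega, ?_⟩
        rw [himg, hper]
        exact (hf i).1.2
      · intro z hz
        obtain ⟨hz1, hz2⟩ := hz
        have hz' : z - n ∈ S i := by
          have hb : i ≤ z - (n : ℤ) := by omega
          refine ⟨hb, ?_⟩
          have he : v '' Set.Ioc (i + n) z = v '' Set.Ioc i (z - n) := by
            have h6 := himg i (z - n)
            rwa [show z - (n : ℤ) + n = z by ring] at h6
          rw [hper, he] at hz2
          exact hz2
        have := (hf i).2 hz'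
        omega
    exact ((hf (i + n)).unique h1)
  have hbd : ∀ i : ℤ, i ≤ f i ∧ f i ≤ i + n :=
    fun i => ⟨(hf i).1.1, (hf i).2 (htop i)⟩
  have key : ∀ i₁ i₂ : ℤ, i₁ < i₂ → f i₁ = f i₂ → False := by
    intro i₁ i₂ hlt heq
    set k := f i₂ with hk
    have hk2 : i₂ ≤ k := (hf i₂).1.1
    have hk1 : i₁ < k := lt_of_lt_of_le hlt hk2
    have hvk : v k ∈ Submodule.span ℂ (v '' Set.Ioc i₁ (k - 1)) := by
      rcases eq_or_lt_of_le hk2 with h | h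
      · have h0 : v i₂ ∈ Submodule.span ℂ (v '' Set.Ioc i₂ k) := (hf i₂).1.2
        rw [← h, Set.Ioc_self, Set.image_empty, Submodule.span_empty,
          Submodule.mem_bot] at h0
        rw [← h, h0]
        exact Submodule.zero_mem _
      · have hnotin : v i₂ ∉ Submodule.span ℂ (v '' Set.Ioc i₂ (k - 1)) := by
          intro hmem
          have hm2 : k - 1 ∈ S i₂ := ⟨by omega, hmem⟩
          have : k ≤ k - 1 := (hf i₂).2 hm2
          omega
        have hins : Set.Ioc i₂ k = insert k (Set.Ioc i₂ (k - 1)) := by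
          ext x; simp only [Set.mem_Ioc, Set.mem_insert_iff]; omega
        have hmem : v i₂ ∈ Submodule.span ℂ
            (insert (v k) (v '' Set.Ioc i₂ (k - 1))) := by
          have h2 := (hf i₂).1.2
          rwa [hins, Set.image_insert_eq] at h2
        have hex := mem_span_insert_exchange hmem hnotin
        refine Submodule.span_mono ?_ hex
        intro y hy
        rcases hy with rfl | ⟨x, hx, rfl⟩
        · exact ⟨i₂, by simp only [Set.mem_Ioc]; omega, rfl⟩
        · simp only [Set.mem_Ioc] at hx
          exact ⟨x, by simp only [Set.mem_Ioc]; omega, rfl⟩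
    have hins : Set.Ioc i₁ k = insert k (Set.Ioc i₁ (k - 1)) := by
      ext x; simp only [Set.mem_Ioc, Set.mem_insert_iff]; omega
    have hmem1 : v i₁ ∈ Submodule.span ℂ (v '' Set.Ioc i₁ (k - 1)) := by
      have h1 := (hf i₁).1.2
      rw [heq] at h1
      rwa [hins, Set.image_insert_eq, Submodule.span_insert_eq_span hvk] at h1
    have hm : k - 1 ∈ S i₁ := ⟨by omega, hmem1⟩
    have h5 := (hf i₁).2 hm
    rw [heq] at h5
    omega
  have hinj : Function.Injective f := by
    intro a b hab
    rcases lt_trichotomy a b with h | h | h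
    · exact absurd hab (fun hc => key a b h hc)
    · exact h
    · exact absurd hab.symm (fun hc => key b a h hc)
  have hfper' : ∀ i : ℤ, f (i - n) = f i - n := by
    intro i
    have := hfper (i - n)
    rw [show i - n + (n : ℤ) = i by ring] at this
    omega
  have hmul : ∀ (c : ℤ) (i : ℤ), f (i + c * n) = f i + c * n := by
    intro c
    induction c using Int.induction_on with
    | zero => simp
    | succ c ih =>
        intro i
        rw [show i + ((c : ℤ) + 1) * n = (i + c * n) + n by ring, hfper, ih]
        ring
    | pred c ih =>
        intro i
        rw [show i + (-(c : ℤ) - 1) * n = (i + (-(c : ℤ)) * n) - n by ring,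
          hfper', ih]
        ring
  have hnz : NeZero n := ⟨by omega⟩
  have hsurj : Function.Surjective f := by
    intro m
    set g : ZMod n → ZMod n := fun x => ((f (x.val : ℤ) : ℤ) : ZMod n) with hg
    have hginj : Function.Injective g := by
      intro a b hab
      simp only [hg] at hab
      rw [ZMod.intCast_eq_intCast_iff_dvd_sub] at hab
      obtain ⟨c, hc⟩ := hab
      have h1 : f ((a.val : ℤ) + c * n) = f (b.val : ℤ) := by
        rw [hmul]
        linear_combination -hc
      have h2 : (a.val : ℤ) + c * n = (b.val : ℤ) := hinj h1
      have h3 : ((a.val : ℤ) : ZMod n) = ((b.val : ℤ) : ZMod n) := by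
        rw [ZMod.intCast_eq_intCast_iff_dvd_sub]
        exact ⟨c, by linear_combination -h2⟩
      have h4 : ((a.val : ℕ) : ZMod n) = ((b.val : ℕ) : ZMod n) := by
        exact_mod_cast h3
      rwa [ZMod.natCast_val, ZMod.natCast_val, ZMod.cast_id, ZMod.cast_id] at h4
    have hgsurj : Function.Surjective g := Finite.surjective_of_injective hginj
    obtain ⟨x, hx⟩ := hgsurj ((m : ZMod n))
    simp only [hg] at hx
    rw [ZMod.intCast_eq_intCast_iff_dvd_sub] at hx
    obtain ⟨c, hc⟩ := hx
    refine ⟨(x.val : ℤ) + c * n, ?_⟩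
    rw [hmul]
    linear_combination -hc
  exact ⟨f, hf, ⟨hinj, hsurj⟩, hfper, hbd⟩
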